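/- Consider the dataset in ℝ² with a₁ = (1, −1), y₁ = 1 and a₂ = (−1, −4), y₂ = −1, and the gradient descent iterates θ₀ = 0, θ_{t+1} = θ_t − γ ∇f(θ_t) with step size γ > 0. Then ‖∇f(θ₁)‖ → √2/2 and ‖∇f(θ₂)‖ → 0 as γ → ∞. -/

import Mathlib

noncomputable section

/-- The Euclidean dot product on `ℝ²`. -/
def dot2 (u v : ℝ × ℝ) : ℝ := u.1 * v.1 + u.2 * v.2

/-- The Euclidean norm on `ℝ²`. -/
def enorm2 (u : ℝ × ℝ) : ℝ := Real.sqrt (dot2 u u)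

/-- First sample `a₁ = (1, −1)`, with label `y₁ = 1`. -/
def a1 : ℝ × ℝ := (1, -1)
/-- Second sample `a₂ = (−1, −4)`, with label `y₂ = −1`. -/
def a2 : ℝ × ℝ := (-1, -4)
def y1 : ℝ := 1
def y2 : ℝ := -1

/-- The gradient of the logistic loss for this two-sample dataset. -/
def gradf (θ : ℝ × ℝ) : ℝ × ℝ :=
  -((1 / 2 : ℝ) • ((1 + Real.exp (y1 * dot2 a1 θ))⁻¹ • (y1 • a1)
    + (1 + Real.exp (y2 * dot2 a2 θ))⁻¹ • (y2 • a2)))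

/-- The LR+GD iterates `θ₀ = 0`, `θ_{t+1} = θ_t − γ ∇f(θ_t)`. -/
def gdIter (γ : ℝ) : ℕ → ℝ × ℝ
  | 0 => 0
  | t + 1 => gdIter γ t - γ • gradf (gdIter γ t)

def s1 (γ : ℝ) : ℝ := (1 + Real.exp (-(γ/4)))⁻¹
def s2 (γ : ℝ) : ℝ := (1 + Real.exp (7*γ/2))⁻¹
def t1 (γ : ℝ) : ℝ := γ * (s1 γ - 1/4 - 3/2 * s2 γ)
def t2 (γ : ℝ) : ℝ := γ * (7/2 - 3/2 * s1 γ + 17/2 * s2 γ)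

lemma iter1 (γ : ℝ) : gdIter γ 1 = (γ/2, 3*γ/4) := by
  simp [gdIter, gradf, dot2, a1, a2, y1, y2, Prod.ext_iff, Prod.smul_def]
  norm_num; constructor <;> ring

lemma iter2 (γ : ℝ) : gdIter γ 2 =
    (γ/2 + γ/2*(s1 γ + s2 γ), 3*γ/4 + γ/2*(-(s1 γ) + 4*(s2 γ))) := by
  simp [gdIter, gradf, dot2, a1, a2, y1, y2, Prod.ext_iff, Prod.smul_def, s1, s2]
  norm_num; constructor <;> ring_nf

lemma grad1 (γ : ℝ) : gradf (gdIter γ 1) =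
    (-(1/2)*(s1 γ + s2 γ), -(1/2)*(-(s1 γ) + 4*(s2 γ))) := by
  rw [iter1]
  simp [gradf, dot2, a1, a2, y1, y2, Prod.ext_iff, Prod.smul_def, s1, s2]
  constructor <;> ring_nf

lemma grad2 (γ : ℝ) : gradf (gdIter γ 2) =
    (-(1/2)*((1 + Real.exp (t1 γ))⁻¹ + (1 + Real.exp (t2 γ))⁻¹),
     -(1/2)*(-((1 + Real.exp (t1 γ))⁻¹) + 4*((1 + Real.exp (t2 γ))⁻¹))) := by
  rw [iter2]
  simp [gradf, dot2, a1, a2, y1, y2, Prod.ext_iff, Prod.smul_def, t1, t2]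
  norm_num; constructor <;> ring_nf

open Filter in
lemma hs1 : Tendsto s1 atTop (nhds 1) := by
  have harg : Tendsto (fun γ : ℝ => -(γ/4)) atTop atBot :=
    tendsto_neg_atTop_atBot.comp (tendsto_id.atTop_div_const (by norm_num))
  have hexp : Tendsto (fun γ : ℝ => Real.exp (-(γ/4))) atTop (nhds 0) :=
    Real.tendsto_exp_atBot.comp harg
  have h : Tendsto (fun γ : ℝ => ((1:ℝ) + Real.exp (-(γ/4)))⁻¹) atTop (nhds (((1:ℝ)+0)⁻¹)) :=
    ((tendsto_const_nhds.add hexp).inv₀ (by norm_num))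
  norm_num at h
  exact h

open Filter in
lemma hs2 : Tendsto s2 atTop (nhds 0) := by
  have harg : Tendsto (fun γ : ℝ => 7*γ/2) atTop atTop :=
    (tendsto_id.const_mul_atTop (by norm_num : (0:ℝ) < 7)).atTop_div_const (by norm_num)
  have hexp : Tendsto (fun γ : ℝ => Real.exp (7*γ/2)) atTop atTop :=
    Real.tendsto_exp_atTop.comp harg
  have h : Tendsto (fun γ : ℝ => 1 + Real.exp (7*γ/2)) atTop atTop :=
    tendsto_atTop_add_const_left _ 1 hexp
  exact h.inv_tendsto_atTop

open Filter in
lemma ht1 : Tendsto t1 atTop atTop := by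
  have hg : Tendsto (fun γ => s1 γ - 1/4 - 3/2 * s2 γ) atTop (nhds (3/4 : ℝ)) := by
    have h := (hs1.sub (tendsto_const_nhds : Tendsto (fun _ : ℝ => (1/4:ℝ)) atTop _)).sub
      (hs2.const_mul (3/2))
    norm_num at h
    exact h
  exact Tendsto.atTop_mul_pos (by norm_num) tendsto_id hg

open Filter in
lemma ht2 : Tendsto t2 atTop atTop := by
  have hg : Tendsto (fun γ => 7/2 - 3/2 * s1 γ + 17/2 * s2 γ) atTop (nhds (2 : ℝ)) := by
    have h := ((tendsto_const_nhds : Tendsto (fun _ : ℝ => (7/2:ℝ)) atTop _).sub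
      (hs1.const_mul (3/2))).add (hs2.const_mul (17/2))
    norm_num at h
    exact h
  exact Tendsto.atTop_mul_pos (by norm_num) tendsto_id hg

lemma sqrt_half : Real.sqrt (1/2) = Real.sqrt 2 / 2 := by
  have h2 : (Real.sqrt 2)^2 = 2 := Real.sq_sqrt (by norm_num)
  rw [show (1/2:ℝ) = (Real.sqrt 2/2)^2 by rw [div_pow, h2]; norm_num]
  exact Real.sqrt_sq (by positivity)

/-- For the dataset `a₁ = (1,−1), y₁ = 1`, `a₂ = (−1,−4), y₂ = −1`:
`‖∇f(θ₁)‖ → √2/2` and `‖∇f(θ₂)‖ → 0` as `γ → ∞`. -/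
theorem lr_gd_gradient_norms_limits :
    Filter.Tendsto (fun γ : ℝ => enorm2 (gradf (gdIter γ 1))) Filter.atTop
      (nhds (Real.sqrt 2 / 2)) ∧
    Filter.Tendsto (fun γ : ℝ => enorm2 (gradf (gdIter γ 2))) Filter.atTop (nhds 0) := by
  constructor
  · have hx : Filter.Tendsto (fun γ => -(1/2)*(s1 γ + s2 γ)) Filter.atTop
        (nhds (-(1/2)*(1+0) : ℝ)) := (hs1.add hs2).const_mul _
    have hy : Filter.Tendsto (fun γ => -(1/2)*(-(s1 γ) + 4*(s2 γ))) Filter.atTop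
        (nhds (-(1/2)*(-1+4*0) : ℝ)) := ((hs1.neg).add (hs2.const_mul 4)).const_mul _
    have hsum := (hx.mul hx).add (hy.mul hy)
    have hs := hsum.sqrt
    have hval : Real.sqrt (-(1/2)*(1+0) * (-(1/2)*(1+0)) + -(1/2)*(-1+4*0) * (-(1/2)*(-1+4*0)))
        = Real.sqrt 2 / 2 := by
      rw [show (-(1/2)*(1+0) * (-(1/2)*(1+0)) + -(1/2)*(-1+4*0) * (-(1/2)*(-1+4*0)) : ℝ)
        = 1/2 by norm_num, sqrt_half]
    rw [hval] at hs
    simp only [grad1, enorm2, dot2]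
    exact hs
  · have hp : Filter.Tendsto (fun γ => ((1:ℝ) + Real.exp (t1 γ))⁻¹) Filter.atTop (nhds 0) :=
      (Filter.tendsto_atTop_add_const_left _ 1 (Real.tendsto_exp_atTop.comp ht1)).inv_tendsto_atTop
    have hq : Filter.Tendsto (fun γ => ((1:ℝ) + Real.exp (t2 γ))⁻¹) Filter.atTop (nhds 0) :=
      (Filter.tendsto_atTop_add_const_left _ 1 (Real.tendsto_exp_atTop.comp ht2)).inv_tendsto_atTop
    have hx : Filter.Tendsto (fun γ => -(1/2)*(((1:ℝ) + Real.exp (t1 γ))⁻¹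
        + ((1:ℝ) + Real.exp (t2 γ))⁻¹)) Filter.atTop (nhds (-(1/2)*(0+0) : ℝ)) :=
      (hp.add hq).const_mul _
    have hy : Filter.Tendsto (fun γ => -(1/2)*(-(((1:ℝ) + Real.exp (t1 γ))⁻¹)
        + 4*(((1:ℝ) + Real.exp (t2 γ))⁻¹))) Filter.atTop (nhds (-(1/2)*(-0+4*0) : ℝ)) :=
      ((hp.neg).add (hq.const_mul 4)).const_mul _
    have hsum := (hx.mul hx).add (hy.mul hy)
    have hs := hsum.sqrt
    have hval : Real.sqrt (-(1/2)*((0:ℝ)+0) * (-(1/2)*(0+0)) + -(1/2)*(-0+4*0) * (-(1/2)*(-0+4*0)))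
        = 0 := by norm_num
    rw [hval] at hs
    simp only [grad2, enorm2, dot2]
    exact hs

end
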